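/- Let q be a prime power, K ≥ 2, and let v_1, …, v_{3K−3} be any nonzero vectors of F_{q^2}^K. Then there exists a nonzero Hermitian matrix H ∈ F_{q^2}^{K×K} (i.e., H = σ(H)^T, where σ is the entrywise q-th power map) with rank H ≤ 2 such that v_i H σ(v_i)^T = 0 for every i ∈ {1,…,3K−3}. That is, every set of 3K−3 points in PG(K−1,q^2) is contained in a degenerate Hermitian variety of rank r with 1 ≤ r ≤ 2. -/

import Mathlib

open Polynomial Matrix

lemma aux_card_ker_mul {G M : Type*} [AddCommGroup G] [AddCommGroup M] (f : G →+ M) :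
    Nat.card G = Nat.card f.range * Nat.card f.ker := by
  rw [AddSubgroup.card_eq_card_quotient_mul_card_addSubgroup f.ker]
  congr 1
  exact Nat.card_congr (QuotientAddGroup.quotientKerEquivRange f).toEquiv

lemma aux_card_pow_le {FL : Type*} [Field FL] [Fintype FL] {q : ℕ} (hq : 2 ≤ q) (c : FL) :
    Nat.card {x : FL // x ^ q = c * x} ≤ q := by
  classical
  have hne : (X ^ q - C c * X : FL[X]) ≠ 0 := by
    intro h
    have h2 := congrArg (fun p : FL[X] => p.coeff q) h
    simp only [coeff_sub, coeff_X_pow, coeff_C_mul, Polynomial.coeff_X, coeff_zero,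
      if_pos rfl, if_neg (by omega : ¬ (1:ℕ) = q), mul_zero, sub_zero] at h2
    exact one_ne_zero h2
  have hdeg : (X ^ q - C c * X : FL[X]).natDegree ≤ q := by
    refine (natDegree_sub_le _ _).trans ?_
    simp only [natDegree_X_pow]
    have : (C c * X : FL[X]).natDegree ≤ 1 := (natDegree_C_mul_le c X).trans (by simp)
    omega
  have hmem : ∀ x : {x : FL // x ^ q = c * x},
      x.1 ∈ (X ^ q - C c * X : FL[X]).roots.toFinset := by
    intro x
    rw [Multiset.mem_toFinset, mem_roots']
    refine ⟨hne, ?_⟩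
    simp [IsRoot, sub_eq_zero, x.2]
  have hinj : Function.Injective
      (fun x : {x : FL // x ^ q = c * x} =>
        (⟨x.1, hmem x⟩ : ((X ^ q - C c * X : FL[X]).roots.toFinset : Finset FL))) := by
    intro x y h
    exact Subtype.ext (congrArg Subtype.val h :)
  calc Nat.card {x : FL // x ^ q = c * x}
      ≤ Nat.card ((X ^ q - C c * X : FL[X]).roots.toFinset : Finset FL) :=
        Nat.card_le_card_of_injective _ hinj
    _ = (X ^ q - C c * X : FL[X]).roots.toFinset.card := Nat.card_eq_finsetCard _
    _ ≤ Multiset.card (X ^ q - C c * X : FL[X]).roots := Multiset.toFinset_card_le _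
    _ ≤ _ := (card_roots' _).trans hdeg

lemma aux_rank_add_le {K : Type*} [Field K] {m n : Type*} [Fintype n] [Fintype m]
    (A B : Matrix m n K) : (A + B).rank ≤ A.rank + B.rank := by
  classical
  simp only [Matrix.rank]
  have hr : LinearMap.range (A + B).mulVecLin ≤
      LinearMap.range A.mulVecLin ⊔ LinearMap.range B.mulVecLin := by
    rintro x ⟨y, rfl⟩
    rw [Matrix.mulVecLin_add]
    exact Submodule.add_mem_sup ⟨y, rfl⟩ ⟨y, rfl⟩
  refine (Submodule.finrank_mono hr).trans ?_
  exact Submodule.finrank_add_le_finrank_add_finrank _ _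

lemma aux_rank_vecMulVec_le {K : Type*} [Field K] {m n : Type*} [Fintype n] [Fintype m]
    (w : m → K) (u : n → K) : (vecMulVec w u).rank ≤ 1 := by
  classical
  rw [vecMulVec_eq (Fin 1)]
  refine (Matrix.rank_mul_le_left _ _).trans ?_
  exact (Matrix.rank_le_card_width (replicateCol (Fin 1) w)).trans (by simp)

/-- Every set of `3K-3` points in `PG(K-1,q^2)` is contained in a degenerate Hermitian variety
of rank at most `2`: for any nonzero vectors `v_1, …, v_{3K-3}` of `F_{q^2}^K` there is a
nonzero Hermitian matrix `H` of rank at most `2` with `v_i H σ(v_i)^T = 0` for all `i`. -/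
theorem stmt_17 (q K : ℕ) (hq : IsPrimePow q) (hK : 2 ≤ K)
    (FL : Type) [Field FL] [Fintype FL] (hcard_L : Fintype.card FL = q ^ 2)
    (v : Fin (3 * K - 3) → (Fin K → FL)) (hv : ∀ i, v i ≠ 0) :
    ∃ H : Matrix (Fin K) (Fin K) FL,
      H ≠ 0 ∧ H = (H.map (fun a => a ^ q)).transpose ∧ H.rank ≤ 2 ∧
      ∀ i, dotProduct (Matrix.vecMul (v i) H) (fun j => v i j ^ q) = 0 := by
  classical
  have hq2 : 2 ≤ q := hq.two_le
  have hq0 : q ≠ 0 := by omega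
  haveI : Nontrivial FL := Fintype.one_lt_card_iff_nontrivial.mp (by rw [hcard_L]; nlinarith)
  obtain ⟨n, hpn, hcard⟩ := FiniteField.card FL (ringChar FL)
  obtain ⟨p', k, hp', hk, hq'⟩ := hq
  have hqpk : q = ringChar FL ^ k := by
    have h2k : p' ^ (2 * k) = ringChar FL ^ (n : ℕ) := by
      rw [mul_comm, pow_mul, hq', ← hcard_L, hcard]
    have hp'n : Nat.Prime p' := Nat.prime_iff.mpr hp'
    have hdvd : p' ∣ ringChar FL ^ (n : ℕ) := h2k ▸ dvd_pow_self p' (by omega)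
    have : p' = ringChar FL :=
      (Nat.prime_dvd_prime_iff_eq hp'n hpn).mp (hp'n.dvd_of_dvd_pow hdvd)
    rw [← hq', this]
  set p := ringChar FL with hpdef
  haveI : CharP FL p := ringChar.charP FL
  haveI : Fact p.Prime := ⟨hpn⟩
  have hfrob : ∀ x y : FL, (x + y) ^ q = x ^ q + y ^ q := fun x y => by
    rw [hqpk]; exact add_pow_char_pow x y p k
  have hsumpow : ∀ (s : Finset (Fin K)) (f : Fin K → FL),
      (∑ i ∈ s, f i) ^ q = ∑ i ∈ s, (f i) ^ q := fun s f => by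
    rw [hqpk]; exact sum_pow_char_pow p k s f
  have hqq : ∀ x : FL, (x ^ q) ^ q = x := fun x => by
    rw [← pow_mul, ← sq, ← hcard_L]; exact FiniteField.pow_card x
  -- the kernel counting principle
  have hker_ge : ∀ (f : (Fin K → FL) →+ (Fin (3 * K - 3) → FL)),
      Nat.card f.range ≤ q ^ (2 * (K - 1)) → q ^ 2 ≤ Nat.card f.ker := by
    intro f hf
    have hG : Nat.card (Fin K → FL) = q ^ (2 * (K - 1)) * q ^ 2 := by
      rw [Nat.card_fun, Nat.card_eq_fintype_card, Nat.card_eq_fintype_card,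
        hcard_L, Fintype.card_fin, ← pow_mul, ← pow_add]
      congr 1
      omega
    have hpos : 0 < q ^ (2 * (K - 1)) := pow_pos (by omega : 0 < q) _
    have h1 : q ^ (2 * (K - 1)) * q ^ 2 ≤ q ^ (2 * (K - 1)) * Nat.card f.ker := by
      rw [← hG, aux_card_ker_mul f]
      exact Nat.mul_le_mul_right _ hf
    exact Nat.le_of_mul_le_mul_left h1 hpos
  -- Step A : find a nonzero vector a with ∑ j, v i j * a j ^ q = 0 for i < K - 1
  let A : (Fin K → FL) →+ (Fin (3 * K - 3) → FL) :=
    { toFun := fun a i => if (i : ℕ) < K - 1 then ∑ j, v i j * a j ^ q else 0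
      map_zero' := by
        funext i; split <;> simp [zero_pow hq0]
      map_add' := by
        intro x y; funext i
        by_cases h : (i : ℕ) < K - 1
        · simp only [if_pos h, Pi.add_apply, hfrob, mul_add, Finset.sum_add_distrib]
        · simp [if_neg h] }
  have hArange : Nat.card A.range ≤ q ^ (2 * (K - 1)) := by
    have hinj : Function.Injective
        (fun g : A.range => fun j : Fin (K - 1) => g.1 ⟨j.1, by omega⟩) := by
      rintro ⟨g1, a1, rfl⟩ ⟨g2, a2, rfl⟩ h
      refine Subtype.ext (funext fun i => ?_)
      by_cases hi : (i : ℕ) < K - 1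
      · have h3 := congrFun h ⟨i.1, by omega⟩
        simpa using h3
      · show A a1 i = A a2 i
        simp only [A, AddMonoidHom.coe_mk, ZeroHom.coe_mk, if_neg hi]
    calc Nat.card A.range ≤ Nat.card (Fin (K - 1) → FL) :=
          Nat.card_le_card_of_injective _ hinj
      _ = q ^ (2 * (K - 1)) := by
          rw [Nat.card_fun, Nat.card_eq_fintype_card, Nat.card_eq_fintype_card,
            hcard_L, Fintype.card_fin, ← pow_mul]
  have hAker : q ^ 2 ≤ Nat.card A.ker := hker_ge A hArange
  haveI : Nontrivial A.ker := by
    rw [← Finite.one_lt_card_iff_nontrivial]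
    nlinarith
  obtain ⟨⟨a, haker⟩, ha0'⟩ := exists_ne (0 : A.ker)
  have ha0 : a ≠ 0 := fun h => ha0' (Subtype.ext h)
  have hAa : ∀ i : Fin (3 * K - 3), (i : ℕ) < K - 1 → ∑ j, v i j * a j ^ q = 0 := by
    intro i hi
    have h1 : A a = 0 := AddMonoidHom.mem_ker.mp haker
    have h2 := congrFun h1 i
    simpa [A, if_pos hi] using h2
  -- notation
  set αf : Fin (3 * K - 3) → FL := fun i => ∑ j, v i j * a j ^ q with hαf
  have hconj : ∀ (w : Fin K → FL) (i : Fin (3 * K - 3)),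
      (∑ j, v i j * w j ^ q) ^ q = ∑ k, w k * v i k ^ q := by
    intro w i
    rw [hsumpow]
    refine Finset.sum_congr rfl fun j _ => ?_
    rw [mul_pow, hqq, mul_comm]
  -- Step B : the additive map T
  let T : (Fin K → FL) →+ (Fin (3 * K - 3) → FL) :=
    { toFun := fun b i => αf i * (∑ k, b k * v i k ^ q) + (∑ j, v i j * b j ^ q) * (αf i) ^ q
      map_zero' := by funext i; simp [zero_pow hq0]
      map_add' := by
        intro x y; funext i
        simp only [Pi.add_apply, hfrob, mul_add, add_mul, Finset.sum_add_distrib]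
        ring }
  have hT0 : ∀ (b : Fin K → FL) (i : Fin (3 * K - 3)), (i : ℕ) < K - 1 → T b i = 0 := by
    intro b i hi
    have h1 : αf i = 0 := hAa i hi
    simp [T, h1, zero_pow hq0]
  have hTR : ∀ (b : Fin K → FL) (i : Fin (3 * K - 3)), (T b i) ^ q = (1 : FL) * T b i := by
    intro b i
    rw [one_mul]
    show (αf i * (∑ k, b k * v i k ^ q) + (∑ j, v i j * b j ^ q) * (αf i) ^ q) ^ q
        = αf i * (∑ k, b k * v i k ^ q) + (∑ j, v i j * b j ^ q) * (αf i) ^ q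
    rw [← hconj b i, hfrob, mul_pow, mul_pow, hqq, hqq]
    ring
  have hTrange : Nat.card T.range ≤ q ^ (2 * (K - 1)) := by
    have hmemR : ∀ g : T.range, ∀ i, (g.1 i) ^ q = (1 : FL) * g.1 i := by
      rintro ⟨g, b, rfl⟩ i
      exact hTR b i
    have hzero : ∀ g : T.range, ∀ i : Fin (3 * K - 3), (i : ℕ) < K - 1 → g.1 i = 0 := by
      rintro ⟨g, b, rfl⟩ i hi
      exact hT0 b i hi
    have hinj : Function.Injective
        (fun g : T.range => fun j : Fin (2 * (K - 1)) =>
          (⟨g.1 ⟨K - 1 + j.1, by omega⟩, hmemR g _⟩ : {x : FL // x ^ q = (1 : FL) * x})) := by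
      intro g1 g2 h
      refine Subtype.ext (funext fun i => ?_)
      by_cases hi : (i : ℕ) < K - 1
      · rw [hzero g1 i hi, hzero g2 i hi]
      · have h3 := congrFun h ⟨i.1 - (K - 1), by omega⟩
        have h4 := congrArg Subtype.val h3
        have hidx : (⟨K - 1 + (i.1 - (K - 1)), by omega⟩ : Fin (3 * K - 3)) = i :=
          Fin.ext (by simp; omega)
        simpa [hidx] using h4
    calc Nat.card T.range
        ≤ Nat.card (Fin (2 * (K - 1)) → {x : FL // x ^ q = (1 : FL) * x}) :=
          Nat.card_le_card_of_injective _ hinj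
      _ = Nat.card {x : FL // x ^ q = (1 : FL) * x} ^ (2 * (K - 1)) := by
          rw [Nat.card_fun, Nat.card_eq_fintype_card (α := Fin (2 * (K - 1))),
            Fintype.card_fin]
      _ ≤ q ^ (2 * (K - 1)) := Nat.pow_le_pow_left (aux_card_pow_le hq2 1) _
  have hTker : q ^ 2 ≤ Nat.card T.ker := hker_ge T hTrange
  -- the "bad" set
  set Hm : (Fin K → FL) → Matrix (Fin K) (Fin K) FL :=
    fun b => Matrix.of fun j k => a j ^ q * b k + b j ^ q * a k with hHm
  obtain ⟨j₀, hj₀⟩ := Function.ne_iff.mp ha0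
  have hj₀' : a j₀ ≠ 0 := hj₀
  have haq : a j₀ ^ q ≠ 0 := pow_ne_zero _ hj₀'
  have hent : ∀ b : Fin K → FL, Hm b = 0 → ∀ j k, a j ^ q * b k + b j ^ q * a k = 0 := by
    intro b hb j k
    have := congrFun (congrFun hb j) k
    simpa [Hm] using this
  have hscal : ∀ b : Fin K → FL, Hm b = 0 →
      ∀ k, b k = (-(b j₀ ^ q) / (a j₀ ^ q)) * a k := by
    intro b hb k
    have h := hent b hb j₀ k
    rw [div_mul_eq_mul_div, eq_div_iff haq]
    linear_combination h
  have hmu : ∀ b : Fin K → FL, Hm b = 0 →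
      (-(b j₀ ^ q) / (a j₀ ^ q)) ^ q = (-1 : FL) * (-(b j₀ ^ q) / (a j₀ ^ q)) := by
    intro b hb
    set μ := -(b j₀ ^ q) / (a j₀ ^ q) with hμ
    have h := hent b hb j₀ j₀
    rw [hscal b hb j₀, mul_pow] at h
    have hne : a j₀ ^ q * a j₀ ≠ 0 := mul_ne_zero haq hj₀'
    have h5 : (μ + μ ^ q) * (a j₀ ^ q * a j₀) = 0 := by linear_combination h
    have h6 := (mul_eq_zero.mp h5).resolve_right hne
    linear_combination h6
  have hZcard : Nat.card {b : Fin K → FL | Hm b = 0} ≤ q := by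
    have hinj : Function.Injective
        (fun b : {b : Fin K → FL | Hm b = 0} =>
          (⟨-(b.1 j₀ ^ q) / (a j₀ ^ q), hmu b.1 b.2⟩ :
            {x : FL // x ^ q = (-1 : FL) * x})) := by
      intro b1 b2 h
      have h4 := congrArg Subtype.val h
      refine Subtype.ext (funext fun kk => ?_)
      rw [hscal b1.1 b1.2 kk, hscal b2.1 b2.2 kk]
      simp only at h4
      rw [h4]
    exact (Nat.card_le_card_of_injective _ hinj).trans (aux_card_pow_le hq2 (-1))
  -- choose b in ker T not in the bad set
  have hns : ¬ ((T.ker : Set (Fin K → FL)) ⊆ {b : Fin K → FL | Hm b = 0}) := by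
    intro hsub
    have h7 := Nat.card_mono (Set.toFinite _) hsub
    have h8 : Nat.card (T.ker : Set (Fin K → FL)) = Nat.card T.ker := rfl
    have : q < q ^ 2 := by nlinarith
    omega
  obtain ⟨b, hbker, hbZ⟩ := Set.not_subset.mp hns
  have hTb : T b = 0 := AddMonoidHom.mem_ker.mp hbker
  -- the form equals T b i
  have hform : ∀ i, dotProduct (Matrix.vecMul (v i) (Hm b)) (fun j => v i j ^ q)
      = T b i := by
    intro i
    show (∑ kk, (∑ j, v i j * (a j ^ q * b kk + b j ^ q * a kk)) * v i kk ^ q) = _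
    have hexp : ∀ kk, (∑ j, v i j * (a j ^ q * b kk + b j ^ q * a kk))
        = αf i * b kk + (∑ j, v i j * b j ^ q) * a kk := by
      intro kk
      simp only [mul_add, Finset.sum_add_distrib, hαf]
      rw [Finset.sum_mul, Finset.sum_mul]
      simp only [mul_assoc]
    rw [Finset.sum_congr rfl fun kk _ => by rw [hexp kk]]
    show _ = αf i * (∑ kk, b kk * v i kk ^ q) + (∑ j, v i j * b j ^ q) * (αf i) ^ q
    rw [show (αf i) ^ q = ∑ kk, a kk * v i kk ^ q from hconj a i]
    simp only [add_mul, Finset.sum_add_distrib, mul_assoc, ← Finset.mul_sum]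
  refine ⟨Hm b, hbZ, ?_, ?_, fun i => by rw [hform i, hTb]; rfl⟩
  · ext j kk
    show a j ^ q * b kk + b j ^ q * a kk = (a kk ^ q * b j + b kk ^ q * a j) ^ q
    rw [hfrob, mul_pow, mul_pow, hqq, hqq]
    ring
  · have hsplit : Hm b = vecMulVec (fun j => a j ^ q) b + vecMulVec (fun j => b j ^ q) a := by
      ext j kk
      simp [Hm, vecMulVec]
    rw [hsplit]
    calc (vecMulVec (fun j => a j ^ q) b + vecMulVec (fun j => b j ^ q) a).rank
        ≤ (vecMulVec (fun j => a j ^ q) b).rank + (vecMulVec (fun j => b j ^ q) a).rank :=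
          aux_rank_add_le _ _
      _ ≤ 1 + 1 := add_le_add (aux_rank_vecMulVec_le _ _) (aux_rank_vecMulVec_le _ _)
      _ = 2 := rfl
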